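/- Dynamic regret for S-II (Optimistic Mirror Descent): Let E be a real normed vector space, φ: [0,∞) → [0,+∞] convex with φ(0) = 0, and ψ: E → ℝ ∪ {+∞} proper and φ-convex. Fix T ≥ 1, a ∈ E, a^ψ ∈ ∂ψ(a), positive reals θ_1,…,θ_T, and x̂_1*,…,x̂_T* ∈ E*. Suppose for t = 1,…,T+1 there are points x̃_t ∈ E and dual vectors x̌_t^ψ, x̃_t^ψ ∈ E* with x̌_1^ψ = x̃_1^ψ = a^ψ, x̌_t^ψ = x̃_{t−1}^ψ − θ_{t−1} x_{t−1}* for t ≥ 2, x̌_t^ψ ∈ ∂ψ(x̃_t) and x̃_t^ψ ∈ ∂ψ(x̃_t); moreover for t = 1,…,T there are x_t ∈ E with x̃_t^ψ − θ_t x̂_t* ∈ ∂ψ(x_t), and functions f_t: E → ℝ ∪ {+∞} with x_t* ∈ ∂f_t(x_t). Then for all z_1,…,z_T ∈ dom ψ with f_t(z_t) < +∞: Σ_{t=1}^T (f_t(x_t) − f_t(z_t)) ≤ Σ_{t=1}^T (1/θ_t)[B_ψ(z_t, x̃_t^ψ) − B_ψ(z_t, x̌_{t+1}^ψ)] + Σ_{t=1}^T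 (1/θ_t) φ*(θ_t‖x_t* − x̂_t*‖) − Σ_{t=1}^T (1/θ_t) B_ψ(x_t, x̃_t^ψ). -/

import Mathlib

open Finset

/-- Fenchel conjugate of an extended-real-valued function on a normed space. -/
noncomputable def fconj {E : Type*} [NormedAddCommGroup E] [NormedSpace ℝ E]
    (g : E → EReal) (p : E →L[ℝ] ℝ) : EReal :=
  ⨆ x : E, ((p x : ℝ) : EReal) - g x

/-- Generalized Bregman divergence `B_g(x, y*) = g(x) + g*(y*) − ⟨y*, x⟩`. -/
noncomputable def breg {E : Type*} [NormedAddCommGroup E] [NormedSpace ℝ E]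
    (g : E → EReal) (x : E) (p : E →L[ℝ] ℝ) : EReal :=
  g x + fconj g p - ((p x : ℝ) : EReal)

/-- Subdifferential: `∂g(x) = {x* : B_g(x, x*) = 0}`. -/
def subdiff {E : Type*} [NormedAddCommGroup E] [NormedSpace ℝ E]
    (g : E → EReal) (x : E) : Set (E →L[ℝ] ℝ) :=
  {p | breg g x p = 0}

/-- Conjugate of `Φ : [0,∞) → [0,+∞]` : `Φ*(s) = sup_{r ≥ 0} (s·r − Φ(r))`. -/
noncomputable def phiConj (Φ : ℝ → EReal) (s : ℝ) : EReal :=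
  ⨆ r : {r : ℝ // 0 ≤ r}, ((s * r.1 : ℝ) : EReal) - Φ r.1

lemma ereal_sub_coe_eq_zero {x : EReal} {r : ℝ} (h : x - (r : EReal) = 0) : x = (r : EReal) := by
  induction x using EReal.rec with
  | bot => simp at h
  | coe a => norm_cast at h ⊢; linarith
  | top => simp at h

lemma ereal_add_eq_coe {x y : EReal} {r : ℝ} (h : x + y = (r : EReal)) :
    ∃ u v : ℝ, x = (u : EReal) ∧ y = (v : EReal) ∧ u + v = r := by
  induction x using EReal.rec with
  | bot => simp at h
  | top =>
    induction y using EReal.rec with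
    | bot => simp at h
    | coe b => simp at h
    | top => simp at h
  | coe u =>
    induction y using EReal.rec with
    | bot => simp at h
    | top => simp at h
    | coe v => exact ⟨u, v, rfl, rfl, by exact_mod_cast h⟩

lemma fconj_lb {E : Type*} [NormedAddCommGroup E] [NormedSpace ℝ E]
    (g : E → EReal) (p : E →L[ℝ] ℝ) (x : E) :
    ((p x : ℝ) : EReal) - g x ≤ fconj g p :=
  le_iSup (fun x => ((p x : ℝ) : EReal) - g x) x

lemma subdiff_fin {E : Type*} [NormedAddCommGroup E] [NormedSpace ℝ E]
    {g : E → EReal} {y : E} {p : E →L[ℝ] ℝ} (h : p ∈ subdiff g y) :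
    ∃ u v : ℝ, g y = (u : EReal) ∧ fconj g p = (v : EReal) ∧ u + v = p y := by
  have hb : breg g y p = 0 := h
  rw [breg] at hb
  exact ereal_add_eq_coe (ereal_sub_coe_eq_zero hb)

lemma ereal_coe_sum (s : Finset ℕ) (g : ℕ → ℝ) :
    ((∑ i ∈ s, g i : ℝ) : EReal) = ∑ i ∈ s, ((g i : ℝ) : EReal) :=
  map_sum (⟨⟨Real.toEReal, EReal.coe_zero⟩, EReal.coe_add⟩ : ℝ →+ EReal) _ _

set_option maxHeartbeats 1000000 in
lemma step_lemma {E : Type*} [NormedAddCommGroup E] [NormedSpace ℝ E]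
    (Φ : ℝ → EReal) (hΦnn : ∀ s : ℝ, 0 ≤ s → 0 ≤ Φ s)
    (ψ : E → EReal) (hbot : ∀ x, ψ x ≠ ⊥)
    (hψ : ∀ (x y : E) (p : E →L[ℝ] ℝ), p ∈ subdiff ψ y → Φ ‖x - y‖ ≤ breg ψ x p)
    (θt : ℝ) (hθt : 0 < θt)
    (xh xs : E →L[ℝ] ℝ) (y y' x zz : E) (P R : E →L[ℝ] ℝ)
    (hp : P ∈ subdiff ψ y) (hr : R ∈ subdiff ψ y')
    (hR : R = P - θt • xs)
    (hq : P - θt • xh ∈ subdiff ψ x)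
    (ft : E → EReal) (hfx : xs ∈ subdiff ft x)
    (hz1 : ψ zz < ⊤) (hz2 : ft zz < ⊤) :
    ft x - ft zz = (((ft x).toReal - (ft zz).toReal : ℝ) : EReal) ∧
    breg ψ zz P - breg ψ zz R
      = (((breg ψ zz P).toReal - (breg ψ zz R).toReal : ℝ) : EReal) ∧
    breg ψ x P = (((breg ψ x P).toReal : ℝ) : EReal) ∧
    ((θt * ‖xs - xh‖ * ‖y' - x‖ - (Φ ‖y' - x‖).toReal : ℝ) : EReal)
      ≤ phiConj Φ (θt * ‖xs - xh‖) ∧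
    (ft x).toReal - (ft zz).toReal
      ≤ (1/θt) * ((breg ψ zz P).toReal - (breg ψ zz R).toReal)
        + (1/θt) * (θt * ‖xs - xh‖ * ‖y' - x‖ - (Φ ‖y' - x‖).toReal)
        - (1/θt) * (breg ψ x P).toReal := by
  obtain ⟨ψy, CP, hψy, hCP, eP⟩ := subdiff_fin hp
  obtain ⟨ψy', CR, hψy', hCR, eR⟩ := subdiff_fin hr
  obtain ⟨ψx, CQ, hψx, hCQ, eQ⟩ := subdiff_fin hq
  obtain ⟨Fx, CF, hFx, hCF, eF⟩ := subdiff_fin hfx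
  obtain ⟨ψz, hψzE⟩ : ∃ v : ℝ, ψ zz = (v : EReal) :=
    ⟨(ψ zz).toReal, (EReal.coe_toReal hz1.ne (hbot zz)).symm⟩
  have hfzb : ft zz ≠ ⊥ := by
    intro hb
    have h1 := fconj_lb ft xs zz
    rw [hb, hCF, sub_eq_add_neg] at h1
    simp at h1
  obtain ⟨Fz, hFzE⟩ : ∃ v : ℝ, ft zz = (v : EReal) :=
    ⟨(ft zz).toReal, (EReal.coe_toReal hz2.ne hfzb).symm⟩
  have tFz : (ft zz).toReal = Fz := by rw [hFzE]; exact EReal.toReal_coe _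
  have hFY : xs zz - Fz ≤ CF := by
    have h1 := fconj_lb ft xs zz
    rw [hFzE, hCF] at h1
    exact_mod_cast h1
  -- curvature at y' with q := P - θt • xh
  have hcurv := hψ y' x _ hq
  have hbq : breg ψ y' (P - θt • xh)
      = ((ψy' + CQ - (P - θt • xh) y' : ℝ) : EReal) := by
    rw [breg, hψy', hCQ]; norm_cast
  rw [hbq] at hcurv
  have hΦnn' : (0 : EReal) ≤ Φ ‖y' - x‖ := hΦnn _ (norm_nonneg _)
  have hΦtop : Φ ‖y' - x‖ ≠ ⊤ := (lt_of_le_of_lt hcurv (EReal.coe_lt_top _)).ne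
  have hΦbot : Φ ‖y' - x‖ ≠ ⊥ := by intro h; rw [h] at hΦnn'; simp at hΦnn'
  have hΦE : Φ ‖y' - x‖ = ((Φ ‖y' - x‖).toReal : EReal) := (EReal.coe_toReal hΦtop hΦbot).symm
  have hφle : (Φ ‖y' - x‖).toReal ≤ ψy' + CQ - (P - θt • xh) y' := by
    rw [hΦE] at hcurv; exact_mod_cast hcurv
  have hphiC : ((θt * ‖xs - xh‖ * ‖y' - x‖ - (Φ ‖y' - x‖).toReal : ℝ) : EReal)
      ≤ phiConj Φ (θt * ‖xs - xh‖) := by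
    have h1 : ((θt * ‖xs - xh‖ * ‖y' - x‖ : ℝ) : EReal) - Φ ‖y' - x‖
        ≤ phiConj Φ (θt * ‖xs - xh‖) := by
      have h2 := le_iSup (fun r : {r : ℝ // 0 ≤ r} =>
          ((θt * ‖xs - xh‖ * r.1 : ℝ) : EReal) - Φ r.1)
          (⟨‖y' - x‖, norm_nonneg _⟩ : {r : ℝ // 0 ≤ r})
      simpa [phiConj] using h2
    rw [hΦE] at h1
    exact_mod_cast h1
  -- evaluations
  have hRz : R zz = P zz - θt * xs zz := by rw [hR]; simp
  have hRx : R x = P x - θt * xs x := by rw [hR]; simp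
  have hRy' : R y' = P y' - θt * xs y' := by rw [hR]; simp
  have hqx : (P - θt • xh) x = P x - θt * xh x := by simp
  have hqy' : (P - θt • xh) y' = P y' - θt * xh y' := by simp
  -- Cauchy–Schwarz
  have hcs : xh y' - xh x - (xs y' - xs x) ≤ ‖xs - xh‖ * ‖y' - x‖ := by
    have h1 := (xh - xs).le_opNorm (y' - x)
    have h2 : (xh - xs) (y' - x) ≤ ‖(xh - xs) (y' - x)‖ := le_abs_self _
    have h3 : (xh - xs) (y' - x) = xh y' - xh x - (xs y' - xs x) := by
      simp only [ContinuousLinearMap.sub_apply, map_sub]; ring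
    rw [norm_sub_rev xh xs] at h1
    rw [h3] at h2 h1
    exact le_trans h2 h1
  -- breg values
  have hb1 : breg ψ zz P = ((ψz + CP - P zz : ℝ) : EReal) := by
    rw [breg, hψzE, hCP]; norm_cast
  have hb2 : breg ψ zz R = ((ψz + CR - R zz : ℝ) : EReal) := by
    rw [breg, hψzE, hCR]; norm_cast
  have hb3 : breg ψ x P = ((ψx + CP - P x : ℝ) : EReal) := by
    rw [breg, hψx, hCP]; norm_cast
  have t1 : (breg ψ zz P).toReal = ψz + CP - P zz := by rw [hb1]; exact EReal.toReal_coe _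
  have t2 : (breg ψ zz R).toReal = ψz + CR - R zz := by rw [hb2]; exact EReal.toReal_coe _
  have t3 : (breg ψ x P).toReal = ψx + CP - P x := by rw [hb3]; exact EReal.toReal_coe _
  have tF : (ft x).toReal = Fx := by rw [hFx]; exact EReal.toReal_coe _
  refine ⟨?_, ?_, ?_, hphiC, ?_⟩
  · rw [tF, tFz, hFx, hFzE]; norm_cast
  · rw [t1, t2, hb1, hb2]; norm_cast
  · rw [t3, hb3]
  · rw [t1, t2, t3, tF, tFz]
    have step1 : θt * (Fx - Fz) ≤ θt * (xs x - xs zz) :=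
      mul_le_mul_of_nonneg_left (by linarith [eF, hFY]) hθt.le
    have step2 : θt * (xh y' - xh x - (xs y' - xs x)) ≤ θt * (‖xs - xh‖ * ‖y' - x‖) :=
      mul_le_mul_of_nonneg_left hcs hθt.le
    have main : θt * (Fx - Fz)
        ≤ ((ψz + CP - P zz) - (ψz + CR - R zz))
          + (θt * ‖xs - xh‖ * ‖y' - x‖ - (Φ ‖y' - x‖).toReal)
          - (ψx + CP - P x) := by
      nlinarith [step1, step2, eQ, eR, hφle, hRz, hRx, hRy', hqx, hqy']
    have hpos : (0 : ℝ) < 1 / θt := by positivity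
    have h6 := mul_le_mul_of_nonneg_left main hpos.le
    calc Fx - Fz = (1/θt) * (θt * (Fx - Fz)) := by field_simp
      _ ≤ (1/θt) * (((ψz + CP - P zz) - (ψz + CR - R zz))
            + (θt * ‖xs - xh‖ * ‖y' - x‖ - (Φ ‖y' - x‖).toReal)
            - (ψx + CP - P x)) := h6
      _ = (1/θt) * ((ψz + CP - P zz) - (ψz + CR - R zz))
            + (1/θt) * (θt * ‖xs - xh‖ * ‖y' - x‖ - (Φ ‖y' - x‖).toReal)
            - (1/θt) * (ψx + CP - P x) := by ring

/-- **Dynamic regret for the strategy S-II (Optimistic Mirror Descent).** -/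
theorem dynamic_regret_S_II
    {E : Type*} [NormedAddCommGroup E] [NormedSpace ℝ E]
    (Φ : ℝ → EReal)
    (hΦconv : ∀ a b s t : ℝ, 0 ≤ a → 0 ≤ b → a + b = 1 → 0 ≤ s → 0 ≤ t →
      Φ (a * s + b * t) ≤ (a : EReal) * Φ s + (b : EReal) * Φ t)
    (hΦ0 : Φ 0 = 0) (hΦnn : ∀ s : ℝ, 0 ≤ s → 0 ≤ Φ s)
    (ψ : E → EReal) (hbot : ∀ x, ψ x ≠ ⊥) (hproper : ∃ x, ψ x ≠ ⊤)
    (hψ : ∀ (x y : E) (p : E →L[ℝ] ℝ), p ∈ subdiff ψ y → Φ ‖x - y‖ ≤ breg ψ x p)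
    (T : ℕ) (hT : 1 ≤ T)
    (a : E) (apsi : E →L[ℝ] ℝ) (ha : apsi ∈ subdiff ψ a)
    (θ : ℕ → ℝ) (hθ : ∀ t ∈ Icc 1 T, 0 < θ t)
    (xhat xstar : ℕ → E →L[ℝ] ℝ)
    (xtil : ℕ → E) (xcheck xtilpsi : ℕ → E →L[ℝ] ℝ)
    (hinit : xcheck 1 = apsi ∧ xtilpsi 1 = apsi)
    (hxcheck : ∀ t ∈ Icc 2 (T + 1), xcheck t = xtilpsi (t - 1) - θ (t - 1) • xstar (t - 1))
    (hxtil : ∀ t ∈ Icc 1 (T + 1),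
      xcheck t ∈ subdiff ψ (xtil t) ∧ xtilpsi t ∈ subdiff ψ (xtil t))
    (xt : ℕ → E)
    (hxt : ∀ t ∈ Icc 1 T, xtilpsi t - θ t • xhat t ∈ subdiff ψ (xt t))
    (f : ℕ → E → EReal)
    (hf : ∀ t ∈ Icc 1 T, xstar t ∈ subdiff (f t) (xt t))
    (z : ℕ → E)
    (hz : ∀ t ∈ Icc 1 T, ψ (z t) < ⊤ ∧ f t (z t) < ⊤) :
    ∑ t ∈ Icc 1 T, (f t (xt t) - f t (z t)) ≤
      (∑ t ∈ Icc 1 T, ((1 / θ t : ℝ) : EReal) *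
          (breg ψ (z t) (xtilpsi t) - breg ψ (z t) (xcheck (t + 1))))
      + (∑ t ∈ Icc 1 T, ((1 / θ t : ℝ) : EReal) *
          phiConj Φ (θ t * ‖xstar t - xhat t‖))
      - ∑ t ∈ Icc 1 T, ((1 / θ t : ℝ) : EReal) * breg ψ (xt t) (xtilpsi t) := by
  have step : ∀ t ∈ Icc 1 T,
      f t (xt t) - f t (z t)
        = (((f t (xt t)).toReal - (f t (z t)).toReal : ℝ) : EReal) ∧
      breg ψ (z t) (xtilpsi t) - breg ψ (z t) (xcheck (t + 1))
        = (((breg ψ (z t) (xtilpsi t)).toReal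
            - (breg ψ (z t) (xcheck (t + 1))).toReal : ℝ) : EReal) ∧
      breg ψ (xt t) (xtilpsi t) = (((breg ψ (xt t) (xtilpsi t)).toReal : ℝ) : EReal) ∧
      ((θ t * ‖xstar t - xhat t‖ * ‖xtil (t + 1) - xt t‖
          - (Φ ‖xtil (t + 1) - xt t‖).toReal : ℝ) : EReal)
        ≤ phiConj Φ (θ t * ‖xstar t - xhat t‖) ∧
      (f t (xt t)).toReal - (f t (z t)).toReal
        ≤ (1 / θ t) * ((breg ψ (z t) (xtilpsi t)).toReal
              - (breg ψ (z t) (xcheck (t + 1))).toReal)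
          + (1 / θ t) * (θ t * ‖xstar t - xhat t‖ * ‖xtil (t + 1) - xt t‖
              - (Φ ‖xtil (t + 1) - xt t‖).toReal)
          - (1 / θ t) * (breg ψ (xt t) (xtilpsi t)).toReal := by
    intro t ht
    have ht' := mem_Icc.1 ht
    have hp := (hxtil t (mem_Icc.2 ⟨ht'.1, by omega⟩)).2
    have hr := (hxtil (t + 1) (mem_Icc.2 ⟨by omega, by omega⟩)).1
    have hRdef : xcheck (t + 1) = xtilpsi t - θ t • xstar t := by
      have h := hxcheck (t + 1) (mem_Icc.2 ⟨by omega, by omega⟩)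
      simpa using h
    exact step_lemma Φ hΦnn ψ hbot hψ (θ t) (hθ t ht) (xhat t) (xstar t)
      (xtil t) (xtil (t + 1)) (xt t) (z t) (xtilpsi t) (xcheck (t + 1))
      hp hr hRdef (hxt t ht) (f t) (hf t ht) (hz t ht).1 (hz t ht).2
  have hreal : ∑ t ∈ Icc 1 T, ((f t (xt t)).toReal - (f t (z t)).toReal)
      ≤ (∑ t ∈ Icc 1 T, (1 / θ t) * ((breg ψ (z t) (xtilpsi t)).toReal
            - (breg ψ (z t) (xcheck (t + 1))).toReal))
        + (∑ t ∈ Icc 1 T, (1 / θ t) * (θ t * ‖xstar t - xhat t‖ * ‖xtil (t + 1) - xt t‖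
            - (Φ ‖xtil (t + 1) - xt t‖).toReal))
        - ∑ t ∈ Icc 1 T, (1 / θ t) * (breg ψ (xt t) (xtilpsi t)).toReal := by
    rw [← Finset.sum_add_distrib, ← Finset.sum_sub_distrib]
    exact Finset.sum_le_sum fun t ht => (step t ht).2.2.2.2
  have hS1 : (∑ t ∈ Icc 1 T, ((1 / θ t : ℝ) : EReal) *
        (breg ψ (z t) (xtilpsi t) - breg ψ (z t) (xcheck (t + 1))))
      = ((∑ t ∈ Icc 1 T, (1 / θ t) * ((breg ψ (z t) (xtilpsi t)).toReal
            - (breg ψ (z t) (xcheck (t + 1))).toReal) : ℝ) : EReal) := by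
    rw [ereal_coe_sum]
    refine Finset.sum_congr rfl fun t ht => ?_
    rw [(step t ht).2.1, ← EReal.coe_mul]
  have hS3 : (∑ t ∈ Icc 1 T, ((1 / θ t : ℝ) : EReal) * breg ψ (xt t) (xtilpsi t))
      = ((∑ t ∈ Icc 1 T, (1 / θ t) * (breg ψ (xt t) (xtilpsi t)).toReal : ℝ) : EReal) := by
    rw [ereal_coe_sum]
    refine Finset.sum_congr rfl fun t ht => ?_
    conv_lhs => rw [(step t ht).2.2.1]
    rw [← EReal.coe_mul]
  have hS2 : ((∑ t ∈ Icc 1 T, (1 / θ t) * (θ t * ‖xstar t - xhat t‖ * ‖xtil (t + 1) - xt t‖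
          - (Φ ‖xtil (t + 1) - xt t‖).toReal) : ℝ) : EReal)
      ≤ ∑ t ∈ Icc 1 T, ((1 / θ t : ℝ) : EReal) * phiConj Φ (θ t * ‖xstar t - xhat t‖) := by
    rw [ereal_coe_sum]
    refine Finset.sum_le_sum fun t ht => ?_
    rw [EReal.coe_mul]
    refine mul_le_mul_of_nonneg_left (step t ht).2.2.2.1 ?_
    have hθt := hθ t ht
    have h0 : (0 : ℝ) ≤ 1 / θ t := by positivity
    exact_mod_cast EReal.coe_le_coe_iff.2 h0
  calc ∑ t ∈ Icc 1 T, (f t (xt t) - f t (z t))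
      = ((∑ t ∈ Icc 1 T, ((f t (xt t)).toReal - (f t (z t)).toReal) : ℝ) : EReal) := by
        rw [ereal_coe_sum]
        exact Finset.sum_congr rfl fun t ht => (step t ht).1
    _ ≤ (((∑ t ∈ Icc 1 T, (1 / θ t) * ((breg ψ (z t) (xtilpsi t)).toReal
            - (breg ψ (z t) (xcheck (t + 1))).toReal))
          + (∑ t ∈ Icc 1 T, (1 / θ t) * (θ t * ‖xstar t - xhat t‖ * ‖xtil (t + 1) - xt t‖
            - (Φ ‖xtil (t + 1) - xt t‖).toReal))
          - ∑ t ∈ Icc 1 T, (1 / θ t) * (breg ψ (xt t) (xtilpsi t)).toReal : ℝ) : EReal) :=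
        EReal.coe_le_coe_iff.2 hreal
    _ = ((∑ t ∈ Icc 1 T, (1 / θ t) * ((breg ψ (z t) (xtilpsi t)).toReal
            - (breg ψ (z t) (xcheck (t + 1))).toReal) : ℝ) : EReal)
          + ((∑ t ∈ Icc 1 T, (1 / θ t) * (θ t * ‖xstar t - xhat t‖ * ‖xtil (t + 1) - xt t‖
            - (Φ ‖xtil (t + 1) - xt t‖).toReal) : ℝ) : EReal)
          - ((∑ t ∈ Icc 1 T, (1 / θ t) * (breg ψ (xt t) (xtilpsi t)).toReal : ℝ) : EReal) := by
        norm_cast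
    _ ≤ _ := by
        rw [hS1, hS3]
        rw [sub_eq_add_neg, sub_eq_add_neg]
        exact add_le_add_left (add_le_add_right hS2 _) _
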